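/- arXiv:math/9912234 — 5 statements merged into one kernel-verified Lean document; each statement's English description precedes it below -/
import Mathlib

section
/- If G is a connected square-stable graph that is not complete, then for every maximum stable set S of G² and every vertex a ∈ S, there exists b ∈ S with dist_G(a,b) = 3. -/
open SimpleGraph

attribute [local instance] Classical.propDecidable

variable {V : Type*}

/-- A stable (independent) set: pairwise non-adjacent vertices. -/
def IsStable (G : SimpleGraph V) (S : Finset V) : Prop :=
  ∀ ⦃a⦄, a ∈ S → ∀ ⦃b⦄, b ∈ S → ¬ G.Adj a b

/-- The stability (independence) number α(G). -/
noncomputable def alpha [Fintype V] (G : SimpleGraph V) : ℕ :=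
  (Finset.univ.powerset.filter (fun S => IsStable G S)).sup Finset.card

/-- A maximum stable set, i.e. a member of Ω(G). -/
def IsMaxStable [Fintype V] (G : SimpleGraph V) (S : Finset V) : Prop :=
  IsStable G S ∧ S.card = alpha G

/-- The square G² of a graph: distinct vertices adjacent iff at distance ≤ 2. -/
def square (G : SimpleGraph V) : SimpleGraph V where
  Adj u v := u ≠ v ∧ (G.Adj u v ∨ ∃ w, G.Adj u w ∧ G.Adj w v)
  symm := by
    constructor
    rintro u v ⟨h, h2⟩
    refine ⟨h.symm, ?_⟩
    rcases h2 with h2 | ⟨w, hw1, hw2⟩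
    · exact Or.inl h2.symm
    · exact Or.inr ⟨w, hw2.symm, hw1.symm⟩
  loopless := by constructor; rintro u ⟨h, _⟩; exact h rfl

/-- G is α-square-stable if α(G) = α(G²). -/
def SquareStable [Fintype V] (G : SimpleGraph V) : Prop :=
  alpha G = alpha (square G)

/-- The maximum matching size μ(G). -/
noncomputable def mu [Fintype V] (G : SimpleGraph V) : ℕ :=
  sSup {n | ∃ M : G.Subgraph, M.IsMatching ∧ M.verts.ncard = 2 * n}

/-- f realizes a matching of A into S: it sends each a ∈ A to a distinct
neighbour in S (so the corresponding edges form a matching ⊆ (A,S) saturating A). -/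
def MatchedInto (G : SimpleGraph V) (A S : Finset V) (f : V → V) : Prop :=
  (∀ a ∈ A, f a ∈ S ∧ G.Adj a (f a)) ∧ ∀ a ∈ A, ∀ b ∈ A, f a = f b → a = b

/-- Well-covered: no isolated vertices, and every maximal stable set is maximum. -/
def WellCovered [Fintype V] (G : SimpleGraph V) : Prop :=
  (∀ v : V, ∃ w, G.Adj v w) ∧
    ∀ S : Finset V, IsStable G S → (∀ T : Finset V, IsStable G T → S ⊆ T → S = T) →
      S.card = alpha G

/-- Very well-covered: well-covered and |V(G)| = 2α(G). -/
def VeryWellCovered [Fintype V] (G : SimpleGraph V) : Prop :=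
  WellCovered G ∧ Fintype.card V = 2 * alpha G

/-- The set of pendant (degree-one) vertices of G. -/
noncomputable def pendants [Fintype V] (G : SimpleGraph V) : Finset V :=
  Finset.univ.filter (fun v => G.degree v = 1)

/-- G has a perfect matching consisting of pendant edges. -/
def HasPendantPerfectMatching [Fintype V] (G : SimpleGraph V) : Prop :=
  ∃ M : G.Subgraph, M.IsPerfectMatching ∧
    ∀ a b : V, M.Adj a b → G.degree a = 1 ∨ G.degree b = 1

/-- The star K_{1,n}: vertex 0 is the center, adjacent to n leaves. -/
def starGraph (n : ℕ) : SimpleGraph (Fin (n + 1)) where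
  Adj u v := u ≠ v ∧ (u = 0 ∨ v = 0)
  symm := by constructor; rintro u v ⟨h1, h2⟩; exact ⟨h1.symm, h2.symm⟩
  loopless := by constructor; rintro u ⟨h, _⟩; exact h rfl

lemma stable_card_le_alpha [Fintype V] (G : SimpleGraph V) {S : Finset V}
    (h : IsStable G S) : S.card ≤ alpha G :=
  Finset.le_sup (by simp [Finset.mem_filter, h])

lemma dist_ge_three (G : SimpleGraph V) (hc : G.Connected) {a c : V} (hne : a ≠ c)
    (hnadj : ¬ (square G).Adj a c) : 3 ≤ G.dist a c := by
  by_contra h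
  push_neg at h
  obtain ⟨p, hp⟩ := (hc a c).exists_walk_length_eq_dist
  rw [← hp] at h
  match p, h with
  | SimpleGraph.Walk.nil, _ => exact hne rfl
  | SimpleGraph.Walk.cons h1 SimpleGraph.Walk.nil, _ =>
      exact hnadj ⟨hne, Or.inl h1⟩
  | SimpleGraph.Walk.cons h1 (SimpleGraph.Walk.cons h2 SimpleGraph.Walk.nil), _ =>
      exact hnadj ⟨hne, Or.inr ⟨_, h1, h2⟩⟩
  | SimpleGraph.Walk.cons _ (SimpleGraph.Walk.cons _ (SimpleGraph.Walk.cons _ _)), h => ?_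
  · simp only [SimpleGraph.Walk.length_cons] at h
    omega

lemma cons_cons_of_two_le (G : SimpleGraph V) {u v : V} (p : G.Walk u v)
    (h : 2 ≤ p.length) :
    ∃ w y, ∃ _ : G.Adj u w, ∃ _ : G.Adj w y, ∃ q : G.Walk y v,
      p.length = q.length + 2 := by
  match p, h with
  | SimpleGraph.Walk.nil, h => simp at h
  | SimpleGraph.Walk.cons _ SimpleGraph.Walk.nil, h => simp at h
  | SimpleGraph.Walk.cons h1 (SimpleGraph.Walk.cons h2 q), h =>
      exact ⟨_, _, h1, h2, q, by
        rw [SimpleGraph.Walk.length_cons, SimpleGraph.Walk.length_cons]⟩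

/-- In a connected non-complete square-stable graph, every vertex of a maximum stable
set of G² has another vertex of that set at distance exactly 3. -/
theorem stmt6 [Fintype V] (G : SimpleGraph V) (hc : G.Connected)
    (hs : SquareStable G) (hnc : ∃ u v : V, u ≠ v ∧ ¬ G.Adj u v) :
    ∀ S : Finset V, IsMaxStable (square G) S →
      ∀ a ∈ S, ∃ b ∈ S, G.dist a b = 3 := by
  intro S hS a ha
  obtain ⟨hSst, hScard⟩ := hS
  have hSstG : IsStable G S := fun x hx y hy hxy =>
    hSst hx hy ⟨G.ne_of_adj hxy, Or.inl hxy⟩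
  have hcard : S.card = alpha G := by rw [hScard, hs]
  have h2 : 2 ≤ alpha G := by
    obtain ⟨u, v, huv, hnadj⟩ := hnc
    have hst : IsStable G {u, v} := by
      intro x hx y hy hxy
      simp only [Finset.mem_insert, Finset.mem_singleton] at hx hy
      rcases hx with rfl | rfl <;> rcases hy with rfl | rfl
      · exact G.irrefl hxy
      · exact hnadj hxy
      · exact hnadj hxy.symm
      · exact G.irrefl hxy
    have := stable_card_le_alpha G hst
    rwa [Finset.card_pair huv] at this
  have hdom : ∀ v : V, v ∉ S → ∃ s ∈ S, G.Adj v s := by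
    intro v hv
    by_contra hno
    push_neg at hno
    have hstab : IsStable G (insert v S) := by
      intro x hx y hy hxy
      rcases Finset.mem_insert.mp hx with hx1 | hx1 <;>
        rcases Finset.mem_insert.mp hy with hy1 | hy1
      · subst hx1; subst hy1; exact G.irrefl hxy
      · subst hx1; exact hno y hy1 hxy
      · subst hy1; exact hno x hx1 hxy.symm
      · exact hSstG hx1 hy1 hxy
    have hle := stable_card_le_alpha G hstab
    rw [Finset.card_insert_of_notMem hv, hcard] at hle
    omega
  have hS2 : 1 < S.card := by omega
  obtain ⟨c, hcS, hca⟩ := Finset.exists_mem_ne hS2 a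
  have hd3 : 3 ≤ G.dist a c := dist_ge_three G hc (Ne.symm hca) (hSst ha hcS)
  obtain ⟨p, hp⟩ := (hc a c).exists_walk_length_eq_dist
  obtain ⟨w, y, h1, h2, q, hq⟩ := cons_cons_of_two_le G p (by omega)
  · have hp : q.length + 1 + 1 = G.dist a c := by omega
    have hqd : G.dist y c ≤ q.length := SimpleGraph.dist_le q
    have hyne : y ≠ a := by
      rintro rfl
      have := SimpleGraph.dist_le q
      omega
    have hyS : y ∉ S := fun hyS => hSst ha hyS ⟨hyne.symm, Or.inr ⟨w, h1, h2⟩⟩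
    obtain ⟨s, hsS, hsadj⟩ := hdom y hyS
    have hsa : s ≠ a := by
      intro hEq
      have hadj : G.Adj a y := hEq ▸ hsadj.symm
      have hw : G.dist a c ≤ (SimpleGraph.Walk.cons hadj q).length :=
        SimpleGraph.dist_le _
      simp only [SimpleGraph.Walk.length_cons] at hw
      omega
    refine ⟨s, hsS, le_antisymm ?_ (dist_ge_three G hc hsa.symm (hSst ha hsS))⟩
    have hw : G.dist a s ≤
        (SimpleGraph.Walk.cons h1 (SimpleGraph.Walk.cons h2
          (SimpleGraph.Walk.cons hsadj SimpleGraph.Walk.nil))).length :=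
      SimpleGraph.dist_le _
    simpa using hw
end

section
/- If G is square-stable, then for every maximum stable set S₁ of G and every maximum stable set S₂ of G², the induced subgraph G[S₁ △ S₂] has a unique perfect matching, and this matching is induced (no edge of G joins two distinct matching edges). -/
open SimpleGraph

attribute [local instance] Classical.propDecidable

variable {V : Type*}

/-- If G is square-stable then for all S₁ ∈ Ω(G), S₂ ∈ Ω(G²), the induced subgraph on
S₁ △ S₂ has a unique perfect matching, and this matching is induced. -/
theorem stmt10 [Fintype V] [DecidableEq V] (G : SimpleGraph V) (h : SquareStable G) :
    ∀ S₁ S₂ : Finset V, IsMaxStable G S₁ → IsMaxStable (square G) S₂ →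
      ∃ M : G.Subgraph,
        (M.IsMatching ∧ M.verts = ↑((S₁ \ S₂) ∪ (S₂ \ S₁))) ∧
        (∀ N : G.Subgraph,
          N.IsMatching ∧ N.verts = ↑((S₁ \ S₂) ∪ (S₂ \ S₁)) → N = M) ∧
        (∀ a b c d : V, M.Adj a b → M.Adj c d → a ≠ c → a ≠ d → ¬ G.Adj a c) := by
  intro S₁ S₂ hS₁ hS₂
  obtain ⟨hst₁, hcard₁⟩ := hS₁
  obtain ⟨hst₂, hcard₂⟩ := hS₂
  have hst₂G : IsStable G S₂ := by
    intro a ha b hb hab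
    exact hst₂ ha hb ⟨hab.ne, Or.inl hab⟩
  have hcards : S₁.card = S₂.card := by rw [hcard₁, hcard₂, h]
  set A := S₁ \ S₂ with hAdef
  set B := S₂ \ S₁ with hBdef
  have hABcard : A.card = B.card := Finset.card_sdiff_comm hcards
  have hle : ∀ T : Finset V, IsStable G T → T.card ≤ alpha G := fun T hT =>
    Finset.le_sup (Finset.mem_filter.mpr ⟨Finset.mem_powerset.mpr (Finset.subset_univ T), hT⟩)
  -- any vertex has at most one neighbour in S₂
  have huniq : ∀ a : V, ∀ b ∈ S₂, ∀ b' ∈ S₂, G.Adj a b → G.Adj a b' → b = b' := by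
    intro a b hb b' hb' h1 h2
    by_contra hne
    exact hst₂ hb hb' ⟨hne, Or.inr ⟨a, h1.symm, h2⟩⟩
  have hAS₁ : ∀ a ∈ A, a ∈ S₁ := fun a ha => (Finset.mem_sdiff.mp ha).1
  have hBS₂ : ∀ b ∈ B, b ∈ S₂ := fun b hb => (Finset.mem_sdiff.mp hb).1
  -- each b ∈ B has a neighbour in A
  have hexB : ∀ b ∈ B, ∃ a ∈ A, G.Adj b a := by
    intro b hb
    obtain ⟨hb₂, hb₁⟩ := Finset.mem_sdiff.mp hb
    by_contra hno
    push_neg at hno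
    have key : ∀ z ∈ S₁, ¬ G.Adj b z := by
      intro z hz hbz
      by_cases hz₂ : z ∈ S₂
      · exact hst₂G hb₂ hz₂ hbz
      · exact hno z (Finset.mem_sdiff.mpr ⟨hz, hz₂⟩) hbz
    have hstab : IsStable G (insert b S₁) := by
      intro x hx y hy hxy
      rcases Finset.mem_insert.mp hx with hx' | hx'
      · subst hx'
        rcases Finset.mem_insert.mp hy with hy' | hy'
        · subst hy'; exact G.loopless.irrefl _ hxy
        · exact key y hy' hxy
      · rcases Finset.mem_insert.mp hy with hy' | hy'
        · subst hy'; exact key x hx' hxy.symm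
        · exact hst₁ hx' hy' hxy
    have := hle _ hstab
    rw [Finset.card_insert_of_notMem hb₁, hcard₁] at this
    omega
  -- a choice function B → A
  set f : ∀ b ∈ B, V := fun b hb => (hexB b hb).choose with hfdef
  have hfA : ∀ b (hb : b ∈ B), f b hb ∈ A := fun b hb => (hexB b hb).choose_spec.1
  have hfAdj : ∀ b (hb : b ∈ B), G.Adj b (f b hb) := fun b hb => (hexB b hb).choose_spec.2
  have hfinj : ∀ b b' (hb : b ∈ B) (hb' : b' ∈ B), f b hb = f b' hb' → b = b' := by
    intro b b' hb hb' heq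
    exact huniq (f b hb) b (hBS₂ b hb) b' (hBS₂ b' hb') (hfAdj b hb).symm
      (heq ▸ (hfAdj b' hb').symm)
  have hsurj : ∀ a ∈ A, ∃ b, ∃ (hb : b ∈ B), a = f b hb :=
    Finset.surj_on_of_inj_on_of_card_le f hfA hfinj hABcard.le
  -- each a ∈ A has a neighbour in B
  have hexA : ∀ a ∈ A, ∃ b ∈ B, G.Adj a b := by
    intro a ha
    obtain ⟨b, hb, rfl⟩ := hsurj a ha
    exact ⟨b, hb, (hfAdj b hb).symm⟩
  -- each b ∈ B has a unique neighbour in A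
  have huniqB : ∀ b ∈ B, ∀ a ∈ A, ∀ a' ∈ A, G.Adj b a → G.Adj b a' → a = a' := by
    intro b hb a ha a' ha' h1 h2
    obtain ⟨b₁, hb₁, rfl⟩ := hsurj a ha
    obtain ⟨b₂, hb₂, rfl⟩ := hsurj a' ha'
    have e1 : b₁ = b := huniq (f b₁ hb₁) b₁ (hBS₂ b₁ hb₁) b (hBS₂ b hb)
      (hfAdj b₁ hb₁).symm h1.symm
    have e2 : b₂ = b := huniq (f b₂ hb₂) b₂ (hBS₂ b₂ hb₂) b (hBS₂ b hb)
      (hfAdj b₂ hb₂).symm h2.symm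
    subst e1; subst e2
    rfl
  -- the matching subgraph
  refine ⟨{ verts := ↑(A ∪ B),
            Adj := fun x y => x ∈ A ∪ B ∧ y ∈ A ∪ B ∧ G.Adj x y,
            adj_sub := fun hxy => hxy.2.2,
            edge_vert := fun hxy => Finset.mem_coe.mpr hxy.1,
            symm := ⟨fun x y hxy => ⟨hxy.2.1, hxy.1, hxy.2.2.symm⟩⟩ }, ?_, ?_, ?_⟩
  · constructor
    · -- IsMatching
      intro v hv
      rcases Finset.mem_union.mp (Finset.mem_coe.mp hv) with hvA | hvB
      · obtain ⟨b, hb, hadj⟩ := hexA v hvA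
        refine ⟨b, ⟨Finset.mem_union_left _ hvA, Finset.mem_union_right _ hb, hadj⟩, ?_⟩
        rintro w ⟨-, hw, hadjw⟩
        rcases Finset.mem_union.mp hw with hwA | hwB
        · exact absurd hadjw (hst₁ (hAS₁ v hvA) (hAS₁ w hwA))
        · exact huniq v w (hBS₂ w hwB) b (hBS₂ b hb) hadjw hadj
      · obtain ⟨a, ha, hadj⟩ := hexB v hvB
        refine ⟨a, ⟨Finset.mem_union_right _ hvB, Finset.mem_union_left _ ha, hadj⟩, ?_⟩
        rintro w ⟨-, hw, hadjw⟩
        rcases Finset.mem_union.mp hw with hwA | hwB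
        · exact huniqB v hvB w hwA a ha hadjw hadj
        · exact absurd hadjw (hst₂G (hBS₂ v hvB) (hBS₂ w hwB))
    · rfl
  · -- uniqueness
    rintro N ⟨hNm, hNv⟩
    have hNsub : ∀ x y, N.Adj x y → x ∈ A ∪ B ∧ y ∈ A ∪ B ∧ G.Adj x y := by
      intro x y hxy
      refine ⟨?_, ?_, hxy.adj_sub⟩
      · exact Finset.mem_coe.mp (hNv ▸ hxy.fst_mem)
      · exact Finset.mem_coe.mp (hNv ▸ hxy.snd_mem)
    refine SimpleGraph.Subgraph.ext hNv ?_
    funext x y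
    apply propext
    constructor
    · exact hNsub x y
    · rintro ⟨hx, hy, hxy⟩
      have hxv : x ∈ N.verts := hNv ▸ Finset.mem_coe.mpr hx
      obtain ⟨w, hw, huw⟩ := hNm hxv
      have hw' := hNsub x w hw
      -- both y and w are partners of x in the "full" matching; show y = w
      have : y = w := by
        rcases Finset.mem_union.mp hx with hxA | hxB
        · rcases Finset.mem_union.mp hy with hyA | hyB
          · exact absurd hxy (hst₁ (hAS₁ x hxA) (hAS₁ y hyA))
          · rcases Finset.mem_union.mp hw'.2.1 with hwA | hwB
            · exact absurd hw'.2.2 (hst₁ (hAS₁ x hxA) (hAS₁ w hwA))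
            · exact huniq x y (hBS₂ y hyB) w (hBS₂ w hwB) hxy hw'.2.2
        · rcases Finset.mem_union.mp hy with hyA | hyB
          · rcases Finset.mem_union.mp hw'.2.1 with hwA | hwB
            · exact huniqB x hxB y hyA w hwA hxy hw'.2.2
            · exact absurd hw'.2.2 (hst₂G (hBS₂ x hxB) (hBS₂ w hwB))
          · exact absurd hxy (hst₂G (hBS₂ x hxB) (hBS₂ y hyB))
      exact this ▸ hw
  · -- induced
    rintro a b c d ⟨ha, hb, hab⟩ ⟨hc, hd, hcd⟩ hac had hGac
    rcases Finset.mem_union.mp ha with haA | haB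
    · rcases Finset.mem_union.mp hc with hcA | hcB
      · exact hst₁ (hAS₁ a haA) (hAS₁ c hcA) hGac
      · -- a ∈ A, c ∈ B : b ∈ B, b = c, then d is also partner of c=b, a = d
        rcases Finset.mem_union.mp hb with hbA | hbB
        · exact hst₁ (hAS₁ a haA) (hAS₁ b hbA) hab
        · have hbc : b = c := huniq a b (hBS₂ b hbB) c (hBS₂ c hcB) hab hGac
          subst hbc
          rcases Finset.mem_union.mp hd with hdA | hdB
          · exact had (huniqB b hbB a haA d hdA hab.symm hcd)
          · exact hst₂G (hBS₂ b hbB) (hBS₂ d hdB) hcd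
    · rcases Finset.mem_union.mp hc with hcA | hcB
      · rcases Finset.mem_union.mp hd with hdA | hdB
        · exact hst₁ (hAS₁ c hcA) (hAS₁ d hdA) hcd
        · exact had (huniq c a (hBS₂ a haB) d (hBS₂ d hdB) hGac.symm hcd)
      · exact hst₂G (hBS₂ a haB) (hBS₂ c hcB) hGac
end

section
/- Every square-stable graph is α⁺-stable; moreover, the intersection of all maximum stable sets of a square-stable graph is empty (i.e., it is α₀⁺-stable). -/
open SimpleGraph

attribute [local instance] Classical.propDecidable

variable {V : Type*}

lemma le_square (G : SimpleGraph V) : G ≤ square G :=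
  fun a b hab => ⟨hab.ne, Or.inl hab⟩

lemma isStable_of_le {G H : SimpleGraph V} (hGH : G ≤ H) {S : Finset V}
    (hS : IsStable H S) : IsStable G S :=
  fun a ha b hb hadj => hS ha hb (hGH hadj)

lemma card_le_alpha [Fintype V] {G : SimpleGraph V} {S : Finset V}
    (hS : IsStable G S) : S.card ≤ alpha G :=
  Finset.le_sup (by simp [Finset.mem_filter, hS])

lemma alpha_anti [Fintype V] {G H : SimpleGraph V} (hGH : G ≤ H) :
    alpha H ≤ alpha G := by
  apply Finset.sup_le
  intro S hS
  rw [Finset.mem_filter] at hS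
  exact card_le_alpha (isStable_of_le hGH hS.2)

lemma exists_max_stable [Fintype V] (G : SimpleGraph V) :
    ∃ S : Finset V, IsStable G S ∧ S.card = alpha G := by
  have hne : (Finset.univ.powerset.filter (fun S => IsStable G S)).Nonempty :=
    ⟨∅, by simp [IsStable]⟩
  obtain ⟨S, hS, hsup⟩ := Finset.exists_mem_eq_sup _ hne Finset.card
  rw [Finset.mem_filter] at hS
  exact ⟨S, hS.2, hsup.symm⟩

lemma swap_stable [Fintype V] {G : SimpleGraph V} {S : Finset V}
    (hS : IsStable (square G) S) {v w : V} (hv : v ∈ S) (hw : G.Adj v w) :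
    IsStable G (insert w (S.erase v)) ∧ (insert w (S.erase v)).card = S.card ∧
      v ∉ insert w (S.erase v) := by
  have hwS : w ∉ S := fun hwS => hS hv hwS ⟨hw.ne, Or.inl hw⟩
  refine ⟨?_, ?_, ?_⟩
  · intro a ha b hb hadj
    rcases Finset.mem_insert.mp ha with rfl | ha' <;>
      rcases Finset.mem_insert.mp hb with rfl | hb'
    · exact hadj.ne rfl
    · exact hS hv (Finset.mem_of_mem_erase hb')
        ⟨(Finset.ne_of_mem_erase hb').symm, Or.inr ⟨a, hw, hadj⟩⟩
    · exact hS (Finset.mem_of_mem_erase ha') hv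
        ⟨Finset.ne_of_mem_erase ha', Or.inr ⟨b, hadj, hw.symm⟩⟩
    · exact hS (Finset.mem_of_mem_erase ha') (Finset.mem_of_mem_erase hb')
        (le_square G hadj)
  · rw [Finset.card_insert_of_notMem (fun hw' => hwS (Finset.mem_of_mem_erase hw')),
      Finset.card_erase_of_mem hv]
    exact Nat.succ_pred_eq_of_pos (Finset.card_pos.mpr ⟨v, hv⟩)
  · intro hvmem
    rcases Finset.mem_insert.mp hvmem with rfl | h'
    · exact hw.ne rfl
    · exact Finset.notMem_erase v S h'

lemma exists_neighbor {G : SimpleGraph V} [Fintype V] (hc : G.Connected)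
    (hcard : 2 ≤ Fintype.card V) (v : V) : ∃ w, G.Adj v w := by
  obtain ⟨u, hu⟩ := Fintype.exists_ne_of_one_lt_card (by omega) v
  obtain ⟨p⟩ := hc.preconnected v u
  cases p with
  | nil => exact absurd rfl hu.symm
  | cons h _ => exact ⟨_, h⟩

lemma exists_max_stable_avoiding [Fintype V] {G : SimpleGraph V} (hc : G.Connected)
    (hcard : 2 ≤ Fintype.card V) (h : SquareStable G) (v : V) :
    ∃ S : Finset V, IsStable G S ∧ S.card = alpha G ∧ v ∉ S := by
  obtain ⟨S₀, hS₀, hcard₀⟩ := exists_max_stable (square G)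
  have hcard₀' : S₀.card = alpha G := by rw [hcard₀, h]
  by_cases hv : v ∈ S₀
  · obtain ⟨w, hw⟩ := exists_neighbor hc hcard v
    obtain ⟨h1, h2, h3⟩ := swap_stable hS₀ hv hw
    exact ⟨_, h1, by rw [h2, hcard₀'], h3⟩
  · exact ⟨S₀, isStable_of_le (le_square G) hS₀, hcard₀', hv⟩

/-- Every square-stable graph is α⁺-stable; moreover the intersection of all its maximum
stable sets is empty (it is α₀⁺-stable). -/
theorem stmt12 [Fintype V] (G : SimpleGraph V) (hc : G.Connected)
    (hcard : 2 ≤ Fintype.card V) (h : SquareStable G) :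
    (∀ u v : V, u ≠ v → ¬ G.Adj u v →
        alpha (G ⊔ fromEdgeSet {s(u, v)}) = alpha G) ∧
    (∀ v : V, ∃ S : Finset V, IsMaxStable G S ∧ v ∉ S) := by
  constructor
  · intro u v huv hadj
    refine le_antisymm (alpha_anti le_sup_left) ?_
    obtain ⟨S, hS, hScard, hu⟩ := exists_max_stable_avoiding hc hcard h u
    rw [← hScard]
    apply card_le_alpha
    intro a ha b hb hab
    rcases hab with hab | hab
    · exact hS ha hb hab
    · rw [fromEdgeSet_adj, Set.mem_singleton_iff, Sym2.eq_iff] at hab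
      rcases hab.1 with ⟨rfl, rfl⟩ | ⟨rfl, rfl⟩
      · exact hu ha
      · exact hu hb
  · intro v
    obtain ⟨S, h1, h2, h3⟩ := exists_max_stable_avoiding hc hcard h v
    exact ⟨S, ⟨h1, h2⟩, h3⟩
end

section
/- Every square-stable graph is well-covered: every maximal stable set is a maximum stable set. -/
open SimpleGraph

attribute [local instance] Classical.propDecidable

variable {V : Type*}

/-- Every square-stable graph without isolated vertices is well-covered. -/
theorem stmt13 [Fintype V] (G : SimpleGraph V)
    (hiso : ∀ v : V, ∃ w, G.Adj v w) (h : SquareStable G) :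
    WellCovered G := by
  refine ⟨hiso, fun S hS hmax => ?_⟩
  have hle : ∀ T : Finset V, IsStable G T → T.card ≤ alpha G := by
    intro T hT
    apply Finset.le_sup
    simp [hT]
  have hne : (Finset.univ.powerset.filter (fun T => IsStable (square G) T)).Nonempty :=
    ⟨∅, by simp [IsStable]⟩
  obtain ⟨W, hWmem, hWsup⟩ := Finset.exists_mem_eq_sup _ hne Finset.card
  simp only [Finset.mem_filter] at hWmem
  have hWstable := hWmem.2
  have hWcard : W.card = alpha (square G) := hWsup.symm
  -- every vertex outside S has a neighbour in S (maximality)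
  have hnbr : ∀ a : V, a ∉ S → ∃ s ∈ S, G.Adj a s := by
    intro a haS
    by_contra hcon
    push_neg at hcon
    have hst : IsStable G (insert a S) := by
      intro x hx y hy
      simp only [Finset.mem_insert] at hx hy
      rcases hx with rfl | hx <;> rcases hy with rfl | hy
      · exact G.irrefl
      · exact fun hadj => hcon y hy hadj
      · exact fun hadj => hcon x hx hadj.symm
      · exact hS hx hy
    have heq := hmax _ hst (Finset.subset_insert a S)
    exact haS (heq ▸ Finset.mem_insert_self a S)
  classical
  set g : V → V := fun a => if ha : a ∈ S then a else (hnbr a ha).choose with hg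
  have hgS : ∀ a, g a ∈ S ∨ a ∈ S := by
    intro a
    by_cases ha : a ∈ S
    · exact Or.inr ha
    · left; simp only [hg, dif_neg ha]; exact (hnbr a ha).choose_spec.1
  have hgmem : ∀ a, g a ∈ S := by
    intro a
    by_cases ha : a ∈ S
    · simp [hg, ha]
    · simp only [hg, dif_neg ha]; exact (hnbr a ha).choose_spec.1
  have hgadj : ∀ a, a ∉ S → G.Adj a (g a) := by
    intro a ha
    simp only [hg, dif_neg ha]; exact (hnbr a ha).choose_spec.2
  have hgid : ∀ a, a ∈ S → g a = a := by
    intro a ha; simp [hg, ha]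
  have hinj : Set.InjOn g W := by
    intro a haW b hbW hab
    by_contra hne'
    have hsq : (square G).Adj a b := by
      refine ⟨hne', ?_⟩
      by_cases ha : a ∈ S <;> by_cases hb : b ∈ S
      · exact absurd ((hgid a ha).symm.trans (hab.trans (hgid b hb))) hne'
      · left
        have := hgadj b hb
        rw [← hab, hgid a ha] at this
        exact this.symm
      · left
        have := hgadj a ha
        rw [hab, hgid b hb] at this
        exact this
      · exact Or.inr ⟨g a, hgadj a ha, hab ▸ (hgadj b hb).symm⟩
    exact hWstable haW hbW hsq
  have hWS : W.card ≤ S.card :=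
    Finset.card_le_card_of_injOn g (fun a _ => hgmem a) hinj
  have h1 : alpha G ≤ S.card := by
    calc alpha G = alpha (square G) := h
      _ = W.card := hWcard.symm
      _ ≤ S.card := hWS
  exact le_antisymm (hle S hS) h1
end

section
/- If G is a square-stable König-Egerváry graph, then its square G² is also a König-Egerváry graph. -/
open SimpleGraph

attribute [local instance] Classical.propDecidable

variable {V : Type*}

/-- The set defining `mu` is bounded above. -/
lemma muSet_bddAbove [Fintype V] (G : SimpleGraph V) :
    BddAbove {n | ∃ M : G.Subgraph, M.IsMatching ∧ M.verts.ncard = 2 * n} := by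
  refine ⟨Fintype.card V, fun n hn => ?_⟩
  obtain ⟨M, hM, hc⟩ := hn
  have : M.verts.ncard ≤ Fintype.card V := by
    have := Set.ncard_le_ncard (Set.subset_univ M.verts) Set.finite_univ
    simpa [Set.ncard_univ] using this
  omega

lemma muSet_nonempty [Fintype V] (G : SimpleGraph V) :
    Set.Nonempty {n | ∃ M : G.Subgraph, M.IsMatching ∧ M.verts.ncard = 2 * n} := by
  refine ⟨0, ⊥, ?_, by simp⟩
  intro v hv
  simp [SimpleGraph.Subgraph.verts_bot] at hv

lemma mu_spec [Fintype V] (G : SimpleGraph V) :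
    ∃ M : G.Subgraph, M.IsMatching ∧ M.verts.ncard = 2 * mu G :=
  Nat.sSup_mem (muSet_nonempty G) (muSet_bddAbove G)

lemma mu_mono [Fintype V] {G H : SimpleGraph V} (hle : G ≤ H) : mu G ≤ mu H := by
  refine csSup_le_csSup (muSet_bddAbove H) (muSet_nonempty G) ?_
  rintro n ⟨M, hM, hc⟩
  refine ⟨⟨M.verts, M.Adj, fun {a b} hab => hle (M.adj_sub hab), M.edge_vert, M.symm⟩, hM, hc⟩

/-- Any stable set and matching: |S| + k ≤ |V| where matching has 2k vertices. -/
lemma stable_card_add_le [Fintype V] (H : SimpleGraph V) (S : Finset V) (hS : IsStable H S)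
    (M : H.Subgraph) (hM : M.IsMatching) (k : ℕ) (hk : M.verts.ncard = 2 * k) :
    S.card + k ≤ Fintype.card V := by
  classical
  set vF : Finset V := M.verts.toFinset with hvF
  have hvFcard : vF.card = 2 * k := by
    rw [← hk, hvF, Set.ncard_eq_toFinset_card']
  have hmem : ∀ v, v ∈ vF ↔ v ∈ M.verts := by simp [hvF]
  set T : Finset V := S.filter (fun v => v ∈ M.verts) with hT
  -- partner function
  let f : V → V := fun v => if h : v ∈ M.verts then (hM h).choose else v
  have hfadj : ∀ v (hv : v ∈ M.verts), M.Adj v (f v) := by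
    intro v hv
    simp only [f, dif_pos hv]
    exact (hM hv).choose_spec.1
  have hfmem : ∀ v (hv : v ∈ M.verts), f v ∈ M.verts := fun v hv =>
    M.edge_vert (hfadj v hv).symm
  have hmaps : ∀ v ∈ T, f v ∈ vF \ S := by
    intro v hv
    rw [hT, Finset.mem_filter] at hv
    obtain ⟨hvS, hvM⟩ := hv
    rw [Finset.mem_sdiff, hmem]
    refine ⟨hfmem v hvM, fun hfS => ?_⟩
    exact hS hvS hfS (M.adj_sub (hfadj v hvM))
  have hinj : ∀ v ∈ T, ∀ w ∈ T, f v = f w → v = w := by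
    intro v hv w hw hfe
    rw [hT, Finset.mem_filter] at hv hw
    have h1 := hfadj v hv.2
    have h2 := hfadj w hw.2
    rw [hfe] at h1
    have hu : f w ∈ M.verts := hfmem w hw.2
    exact ((hM hu).unique h1.symm h2.symm)
  have hTle : T.card ≤ (vF \ S).card := Finset.card_le_card_of_injOn f hmaps hinj
  have hsdiff : (vF \ S).card = vF.card - (vF ∩ S).card := by
    have := Finset.card_sdiff_add_card_inter vF S
    omega
  have hTeq : T = S ∩ vF := by
    ext v; simp [hT, hmem, Finset.mem_inter, and_comm]
  have hIcomm : (vF ∩ S).card = T.card := by rw [hTeq, Finset.inter_comm]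
  have hTk : T.card ≤ k := by
    rw [hsdiff, hIcomm, hvFcard] at hTle
    omega
  have hSsplit : (S \ vF).card + T.card = S.card := by
    rw [hTeq]
    exact Finset.card_sdiff_add_card_inter S vF
  have hout : (S \ vF).card ≤ Fintype.card V - 2 * k := by
    have hsub : S \ vF ⊆ vFᶜ := by
      intro v hv
      rw [Finset.mem_sdiff] at hv
      simpa using hv.2
    have := Finset.card_le_card hsub
    rwa [Finset.card_compl, hvFcard] at this
  have h2k : 2 * k ≤ Fintype.card V := by
    have := Finset.card_le_card (Finset.subset_univ vF)
    rwa [hvFcard, Finset.card_univ] at this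
  omega

lemma alpha_add_mu_le [Fintype V] (H : SimpleGraph V) :
    alpha H + mu H ≤ Fintype.card V := by
  obtain ⟨M, hM, hc⟩ := mu_spec H
  have halpha : alpha H ≤ Fintype.card V - mu H := by
    apply Finset.sup_le
    intro S hSm
    rw [Finset.mem_filter] at hSm
    have := stable_card_add_le H S hSm.2 M hM (mu H) hc
    omega
  have hmu : 2 * mu H ≤ Fintype.card V := by
    rw [← hc]
    have := Set.ncard_le_ncard (Set.subset_univ M.verts) Set.finite_univ
    simpa [Set.ncard_univ] using this
  omega

/-- If G is a square-stable König-Egerváry graph, then G² is also König-Egerváry. -/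
theorem stmt19 [Fintype V] (G : SimpleGraph V)
    (hke : alpha G + mu G = Fintype.card V) (h : SquareStable G) :
    alpha (square G) + mu (square G) = Fintype.card V := by
  have hle : G ≤ square G := by
    intro a b hab
    exact ⟨hab.ne, Or.inl hab⟩
  have h1 : mu G ≤ mu (square G) := mu_mono hle
  have h2 := alpha_add_mu_le (square G)
  have h3 : alpha (square G) = alpha G := h.symm
  omega
end
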